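/- Let k be a field and R = RCFM(k), A the shift matrix. Then the quotient k-vector space R / (R(I−A)) is isomorphic to (∏_{i∈ℕ} k) / (⊕_{i∈ℕ} k), via the map sending the class of a matrix R' to the class of the sequence of its row sums (∑_j r'_{ij})_{i∈ℕ}. -/
import Mathlib


/-- A matrix is row-column finite if every row and every column has finitely many
nonzero entries. -/
def RCF {k : Type*} [Field k] (M : ℕ → ℕ → k) : Prop :=
  (∀ i, {j | M i j ≠ 0}.Finite) ∧ (∀ j, {i | M i j ≠ 0}.Finite)

/-- `RCFM(k)` as a submodule of the space of all `ℕ×ℕ` matrices over `k`. -/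
def RCFMmod (k : Type*) [Field k] : Submodule k (ℕ → ℕ → k) where
  carrier := {M | RCF M}
  zero_mem' := by constructor <;> intro i <;> simp
  add_mem' := by
    rintro M N ⟨hM1, hM2⟩ ⟨hN1, hN2⟩
    constructor
    · intro i
      refine ((hM1 i).union (hN1 i)).subset fun j hj => ?_
      by_contra hc
      simp only [Set.mem_union, Set.mem_setOf_eq, not_or, not_not] at hc
      exact hj (by simp [hc.1, hc.2])
    · intro j
      refine ((hM2 j).union (hN2 j)).subset fun i hi => ?_
      by_contra hc
      simp only [Set.mem_union, Set.mem_setOf_eq, not_or, not_not] at hc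
      exact hi (by simp [hc.1, hc.2])
  smul_mem' := by
    rintro c M ⟨hM1, hM2⟩
    constructor
    · intro i
      refine (hM1 i).subset fun j hj => ?_
      by_contra hc
      simp only [Set.mem_setOf_eq, not_not] at hc
      exact hj (by simp [hc])
    · intro j
      refine (hM2 j).subset fun i hi => ?_
      by_contra hc
      simp only [Set.mem_setOf_eq, not_not] at hc
      exact hi (by simp [hc])

/-- The shift matrix `A` over `k`: `a_{i+1,i} = 1` and all other entries `0`. -/
def shiftA (k : Type*) [Field k] : ℕ → ℕ → k := fun i j => if i = j + 1 then 1 else 0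

/-- The identity `ℕ×ℕ` matrix over `k`. -/
def idMat (k : Type*) [Field k] : ℕ → ℕ → k := fun i j => if i = j then 1 else 0

/-- Product of `ℕ×ℕ` matrices, defined entrywise by the (finite) sums. -/
noncomputable def matMul {k : Type*} [Field k] (M N : ℕ → ℕ → k) : ℕ → ℕ → k :=
  fun i j => ∑ᶠ l, M i l * N l j

/-- The subspace `R(I−A) = {X(I−A) : X ∈ RCFM(k)}` of `RCFM(k)`. -/
def rightMulIdeal (k : Type*) [Field k] : Submodule k (RCFMmod k) :=
  Submodule.span k
    {P : RCFMmod k | ∃ X, RCF X ∧ (P : ℕ → ℕ → k) = matMul X (idMat k - shiftA k)}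

/-- The subspace of finitely supported sequences inside the space of all sequences. -/
def finSupportedSeq (k : Type*) [Field k] : Submodule k (ℕ → k) where
  carrier := {s | (Function.support s).Finite}
  zero_mem' := by simp [Function.support]
  add_mem' := by
    intro s t hs ht
    exact (hs.union ht).subset (Function.support_add s t)
  smul_mem' := by
    intro c s hs
    exact hs.subset (Function.support_const_smul_subset c s)


section AuxLemmas
variable {k : Type*} [Field k]

lemma mul_IA_entry (X : ℕ → ℕ → k) (i j : ℕ) :
    matMul X (idMat k - shiftA k) i j = X i j - X i (j + 1) := by
  have hfun : ∀ l, X i l * (idMat k - shiftA k) l j =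
      (if l = j then X i j else 0) - (if l = j + 1 then X i (j+1) else 0) := by
    intro l
    simp only [Pi.sub_apply, idMat, shiftA, mul_sub, mul_ite, mul_one, mul_zero]
    congr 1 <;> split <;> simp_all
  have hsupp : Function.support (fun l => X i l * (idMat k - shiftA k) l j)
      ⊆ (({j, j+1} : Finset ℕ) : Set ℕ) := by
    intro l hl
    simp only [Function.mem_support, hfun] at hl
    by_contra hc
    simp only [Finset.coe_insert, Finset.coe_singleton, Set.mem_insert_iff,
      Set.mem_singleton_iff, not_or] at hc
    simp [hc.1, hc.2] at hl
  rw [matMul, finsum_eq_finset_sum_of_support_subset _ hsupp]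
  rw [Finset.sum_pair (by omega)]
  rw [hfun, hfun]
  simp [Nat.succ_ne_self, sub_eq_add_neg]

lemma telescope (f : ℕ → k) (hf : (Function.support f).Finite) :
    ∑ᶠ j, (f j - f (j + 1)) = f 0 := by
  obtain ⟨N, hN⟩ := hf.bddAbove
  have hz : ∀ j, N < j → f j = 0 := by
    intro j hj
    by_contra h
    exact absurd (hN h) (by omega)
  have hsupp : Function.support (fun j => f j - f (j+1))
      ⊆ ((Finset.range (N+1) : Finset ℕ) : Set ℕ) := by
    intro j hj
    simp only [Finset.coe_range, Set.mem_Iio]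
    by_contra hc
    push_neg at hc
    simp [Function.mem_support, hz j (by omega), hz (j+1) (by omega)] at hj
  rw [finsum_eq_finset_sum_of_support_subset _ hsupp, Finset.sum_range_sub' f (N+1),
    hz (N+1) (by omega), sub_zero]

lemma mem_RCFMmod {M : ℕ → ℕ → k} (h : M ∈ RCFMmod k) : RCF M := h

/-- row sums as a linear map. -/
noncomputable def rowSumL (k : Type*) [Field k] : RCFMmod k →ₗ[k] (ℕ → k) where
  toFun P := fun i => ∑ᶠ j, (P : ℕ → ℕ → k) i j
  map_add' P Q := by
    funext i
    have hP : (Function.support fun j => (P : ℕ → ℕ → k) i j).Finite := (mem_RCFMmod P.2).1 i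
    have hQ : (Function.support fun j => (Q : ℕ → ℕ → k) i j).Finite := (mem_RCFMmod Q.2).1 i
    simp only [Submodule.coe_add, Pi.add_apply]
    exact finsum_add_distrib hP hQ
  map_smul' c P := by
    funext i
    simp only [SetLike.val_smul, Pi.smul_apply, RingHom.id_apply, smul_eq_mul]
    simpa using (smul_finsum' c ((mem_RCFMmod P.2).1 i)).symm

end AuxLemmas

/-- `RCFM(k)/(R(I−A)) ≅ (∏_{i∈ℕ} k)/(⊕_{i∈ℕ} k)` via the map sending the class of a matrix
to the class of the sequence of its row sums. -/
theorem quotient_rowsum_iso (k : Type*) [Field k] :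
    ∃ e : ((RCFMmod k) ⧸ rightMulIdeal k) ≃ₗ[k] ((ℕ → k) ⧸ finSupportedSeq k),
      ∀ P : RCFMmod k,
        e (Submodule.Quotient.mk P) =
          Submodule.Quotient.mk (fun i => ∑ᶠ j, (P : ℕ → ℕ → k) i j) := by
  classical
  set L : RCFMmod k →ₗ[k] ((ℕ → k) ⧸ finSupportedSeq k) :=
    (finSupportedSeq k).mkQ.comp (rowSumL k) with hL
  have hLapp : ∀ P : RCFMmod k,
      L P = Submodule.Quotient.mk (fun i => ∑ᶠ j, (P : ℕ → ℕ → k) i j) := by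
    intro P; rfl
  have hker : rightMulIdeal k ≤ LinearMap.ker L := by
    rw [rightMulIdeal, Submodule.span_le]
    rintro P ⟨X, hX, hP⟩
    have hrow : ∀ i, ∑ᶠ j, (P : ℕ → ℕ → k) i j = X i 0 := by
      intro i
      have : ∀ j, (P : ℕ → ℕ → k) i j = X i j - X i (j+1) := by
        intro j; rw [hP]; exact mul_IA_entry X i j
      calc ∑ᶠ j, (P : ℕ → ℕ → k) i j = ∑ᶠ j, (X i j - X i (j+1)) := by
            exact finsum_congr this
        _ = X i 0 := telescope (fun j => X i j) (hX.1 i)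
    simp only [SetLike.mem_coe, LinearMap.mem_ker, hLapp]
    rw [Submodule.Quotient.mk_eq_zero]
    have : (fun i => ∑ᶠ j, (P : ℕ → ℕ → k) i j) = fun i => X i 0 := funext hrow
    rw [this]
    exact (hX.2 0).subset fun i hi => hi
  set φ : ((RCFMmod k) ⧸ rightMulIdeal k) →ₗ[k] ((ℕ → k) ⧸ finSupportedSeq k) :=
    (rightMulIdeal k).liftQ L hker with hφ
  have hker2 : LinearMap.ker L ≤ rightMulIdeal k := by
    intro P hPker
    simp only [LinearMap.mem_ker, hLapp, Submodule.Quotient.mk_eq_zero] at hPker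
    -- hPker : rowSum sequence of P is finitely supported
    set s : ℕ → k := fun i => ∑ᶠ j, (P : ℕ → ℕ → k) i j with hs
    have hsfin : (Function.support s).Finite := hPker
    set X : ℕ → ℕ → k := fun i j => ∑ᶠ l, if j ≤ l then (P : ℕ → ℕ → k) i l else 0 with hXdef
    have hrowfin : ∀ i j, (Function.support fun l =>
        if j ≤ l then (P : ℕ → ℕ → k) i l else 0).Finite := by
      intro i j
      refine ((mem_RCFMmod P.2).1 i).subset fun l hl => ?_
      simp only [Function.mem_support] at hl
      by_contra hc
      simp only [Set.mem_setOf_eq, not_not] at hc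
      simp [hc] at hl
    have hsplit : ∀ i j, X i j = (P : ℕ → ℕ → k) i j + X i (j+1) := by
      intro i j
      have hpt : ∀ l, (if j ≤ l then (P : ℕ → ℕ → k) i l else 0) =
          (if l = j then (P : ℕ → ℕ → k) i l else 0) +
          (if j + 1 ≤ l then (P : ℕ → ℕ → k) i l else 0) := by
        intro l
        rcases lt_trichotomy l j with h | h | h
        · rw [if_neg (by omega), if_neg (by omega), if_neg (by omega), add_zero]
        · subst h; rw [if_pos le_rfl, if_pos rfl, if_neg (by omega), add_zero]
        · rw [if_pos (by omega), if_neg (by omega), if_pos (by omega), zero_add]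
      have h1 : (Function.support fun l =>
          if l = j then (P : ℕ → ℕ → k) i l else 0).Finite := by
        apply Set.Finite.subset (Set.finite_singleton j)
        intro l hl
        simp only [Function.mem_support] at hl
        by_contra hc
        simp only [Set.mem_singleton_iff] at hc
        simp [hc] at hl
      calc X i j = ∑ᶠ l, ((if l = j then (P : ℕ → ℕ → k) i l else 0) +
              (if j + 1 ≤ l then (P : ℕ → ℕ → k) i l else 0)) := finsum_congr hpt
        _ = (∑ᶠ l, if l = j then (P : ℕ → ℕ → k) i l else 0) + X i (j+1) :=
              finsum_add_distrib h1 (hrowfin i (j+1))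
        _ = (P : ℕ → ℕ → k) i j + X i (j+1) := by
              congr 1
              rw [finsum_eq_single _ j (fun x hx => by simp [hx])]
              simp
    have htail : ∀ i j, (∀ l, l < j → (P : ℕ → ℕ → k) i l = 0) → X i j = s i := by
      intro i j hzero
      rw [hXdef]
      refine finsum_congr fun l => ?_
      by_cases h : j ≤ l
      · simp [h]
      · simp [h, hzero l (by omega)]
    have hXrcf : RCF X := by
      constructor
      · intro i
        obtain ⟨N, hN⟩ := ((mem_RCFMmod P.2).1 i).bddAbove
        have hz : ∀ l, N < l → (P : ℕ → ℕ → k) i l = 0 := by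
          intro l hl
          by_contra h
          exact absurd (hN h) (by omega)
        apply Set.Finite.subset (Set.finite_Iic N)
        intro j hj
        simp only [Set.mem_setOf_eq] at hj
        by_contra hc
        simp only [Set.mem_Iic, not_le] at hc
        apply hj
        rw [hXdef]
        have : ∀ l, (if j ≤ l then (P : ℕ → ℕ → k) i l else 0) = 0 := by
          intro l
          by_cases h : j ≤ l
          · simp [h, hz l (by omega)]
          · simp [h]
        simp only [this, finsum_zero]
      · intro j
        have hfin : ({i | s i ≠ 0} ∪ ⋃ l ∈ Finset.range j,
            {i | (P : ℕ → ℕ → k) i l ≠ 0}).Finite := by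
          refine Set.Finite.union hsfin ?_
          exact Set.Finite.biUnion (Finset.range j).finite_toSet
            (fun l _ => (mem_RCFMmod P.2).2 l)
        refine hfin.subset fun i hi => ?_
        simp only [Set.mem_setOf_eq] at hi
        by_contra hc
        simp only [Set.mem_union, Set.mem_iUnion, Set.mem_setOf_eq, not_or,
          not_exists, not_not, Finset.mem_range] at hc
        apply hi
        rw [htail i j fun l hl => hc.2 l hl]
        exact hc.1
    have hPeq : (P : ℕ → ℕ → k) = matMul X (idMat k - shiftA k) := by
      funext i j
      rw [mul_IA_entry X i j, hsplit i j]
      ring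
    exact Submodule.subset_span ⟨X, hXrcf, hPeq⟩
  have hinj : Function.Injective φ := by
    rw [hφ, ← LinearMap.ker_eq_bot]
    exact Submodule.ker_liftQ_eq_bot _ _ _ hker2
  have hsurj : Function.Surjective φ := by
    intro q
    obtain ⟨t, rfl⟩ := Submodule.Quotient.mk_surjective _ q
    set D : ℕ → ℕ → k := fun i j => if i = j then t i else 0 with hD
    have hDrcf : D ∈ RCFMmod k := by
      constructor
      · intro i
        apply Set.Finite.subset (Set.finite_singleton i)
        intro j hj
        simp only [Set.mem_setOf_eq, hD] at hj
        by_contra hc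
        simp only [Set.mem_singleton_iff] at hc
        simp [Ne.symm hc] at hj
      · intro j
        apply Set.Finite.subset (Set.finite_singleton j)
        intro i hi
        simp only [Set.mem_setOf_eq, hD] at hi
        by_contra hc
        simp only [Set.mem_singleton_iff] at hc
        simp [hc] at hi
    refine ⟨Submodule.Quotient.mk ⟨D, hDrcf⟩, ?_⟩
    rw [hφ, Submodule.liftQ_apply, hLapp]
    congr 1
    funext i
    rw [finsum_eq_single _ i (fun x hx => by simp [hD, Ne.symm hx])]
    simp [hD]
  refine ⟨LinearEquiv.ofBijective φ ⟨hinj, hsurj⟩, fun P => ?_⟩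
  show φ (Submodule.Quotient.mk P) = _
  rw [hφ, Submodule.liftQ_apply, hLapp]
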